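/- Let X be an n × p real matrix, W a p × K real matrix and W_g a p × K_g real matrix such that W'W and W_g'W_g are invertible. Suppose W'W_g = 0 and W'X'X W_g = 0. Define J := X W (W'W)^{-1} W' and A := X W_g (W_g'W_g)^{-1} W_g'. Then J A' = 0 and A' J = 0; consequently row(J) is orthogonal to row(A) and col(J) is orthogonal to col(A). -/
import Mathlib


open Matrix

/-- The row space of a matrix: the span of its rows in `ℝ^p`. -/
def rowSpace {m k : ℕ} (M : Matrix (Fin m) (Fin k) ℝ) : Submodule ℝ (Fin k → ℝ) :=
  Submodule.span ℝ (Set.range M)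

/-- The column space of a matrix: the span of its columns. -/
def colSpace {m k : ℕ} (M : Matrix (Fin m) (Fin k) ℝ) : Submodule ℝ (Fin m → ℝ) :=
  Submodule.span ℝ (Set.range Mᵀ)

/-- Two subspaces are orthogonal with respect to the standard Euclidean
inner product (dot product). -/
def OrthSub {ι : Type} [Fintype ι] (U V : Submodule ℝ (ι → ℝ)) : Prop :=
  ∀ u ∈ U, ∀ v ∈ V, u ⬝ᵥ v = 0

/-- Corollary 1: if `W'W_g = 0` and `W'X'X W_g = 0`, then for
`J = X W (W'W)⁻¹ W'` and `A = X W_g (W_g'W_g)⁻¹ W_g'` one has `J A' = 0` and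
`A' J = 0`; consequently `row(J) ⊥ row(A)` and `col(J) ⊥ col(A)`. -/
theorem stmt7 (n p K Kg : ℕ) (X : Matrix (Fin n) (Fin p) ℝ)
    (W : Matrix (Fin p) (Fin K) ℝ) (Wg : Matrix (Fin p) (Fin Kg) ℝ)
    (hW : IsUnit (Wᵀ * W)) (hWg : IsUnit (Wgᵀ * Wg))
    (h1 : Wᵀ * Wg = 0) (h2 : Wᵀ * Xᵀ * X * Wg = 0)
    (J A : Matrix (Fin n) (Fin p) ℝ)
    (hJ : J = X * W * (Wᵀ * W)⁻¹ * Wᵀ)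
    (hA : A = X * Wg * (Wgᵀ * Wg)⁻¹ * Wgᵀ) :
    J * Aᵀ = 0 ∧ Aᵀ * J = 0 ∧
    OrthSub (rowSpace J) (rowSpace A) ∧ OrthSub (colSpace J) (colSpace A) := by
  have hJA : J * Aᵀ = 0 := by
    subst hJ hA
    have : Wᵀ * (X * Wg * (Wgᵀ * Wg)⁻¹ * Wgᵀ)ᵀ =
        Wᵀ * Wg * ((Wgᵀ * Wg)⁻¹)ᵀ * (X * Wg)ᵀ := by
      simp [Matrix.transpose_mul, Matrix.mul_assoc]
    calc X * W * (Wᵀ * W)⁻¹ * Wᵀ * (X * Wg * (Wgᵀ * Wg)⁻¹ * Wgᵀ)ᵀ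
        = X * W * (Wᵀ * W)⁻¹ * (Wᵀ * (X * Wg * (Wgᵀ * Wg)⁻¹ * Wgᵀ)ᵀ) := by
          rw [Matrix.mul_assoc]
      _ = 0 := by rw [this, h1]; simp
  have hAJ : Aᵀ * J = 0 := by
    have hWgXXW : Wgᵀ * Xᵀ * X * W = 0 := by
      have := congrArg Matrix.transpose h2
      simpa [Matrix.transpose_mul, Matrix.mul_assoc] using this
    subst hJ hA
    have key : Wgᵀ * (Xᵀ * (X * W * (Wᵀ * W)⁻¹ * Wᵀ)) =
        (Wgᵀ * Xᵀ * X * W) * ((Wᵀ * W)⁻¹ * Wᵀ) := by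
      simp [Matrix.mul_assoc]
    calc (X * Wg * (Wgᵀ * Wg)⁻¹ * Wgᵀ)ᵀ * (X * W * (Wᵀ * W)⁻¹ * Wᵀ)
        = Wg * ((Wgᵀ * Wg)⁻¹)ᵀ * ((X * Wg)ᵀ * (X * W * (Wᵀ * W)⁻¹ * Wᵀ)) := by
          simp [Matrix.transpose_mul, Matrix.mul_assoc]
      _ = Wg * ((Wgᵀ * Wg)⁻¹)ᵀ * (Wgᵀ * (Xᵀ * (X * W * (Wᵀ * W)⁻¹ * Wᵀ))) := by
          simp [Matrix.transpose_mul, Matrix.mul_assoc]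
      _ = 0 := by rw [key, hWgXXW]; simp
  have orth_of_mul : ∀ {m k l : ℕ} (M : Matrix (Fin m) (Fin k) ℝ)
      (N : Matrix (Fin l) (Fin k) ℝ), M * Nᵀ = 0 →
      OrthSub (rowSpace M) (rowSpace N) := by
    intro m k l M N h u hu v hv
    induction hu using Submodule.span_induction with
    | mem x hx =>
      obtain ⟨i, rfl⟩ := hx
      induction hv using Submodule.span_induction with
      | mem y hy =>
        obtain ⟨j, rfl⟩ := hy
        have := congrFun (congrFun h i) j
        simpa [Matrix.mul_apply, dotProduct] using this
      | zero => simp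
      | add a b _ _ ha hb => simp [dotProduct_add, ha, hb]
      | smul c a _ ha => simp [dotProduct_smul, ha]
    | zero => simp
    | add a b _ _ ha hb => simp [add_dotProduct, ha, hb]
    | smul c a _ ha => simp [smul_dotProduct, ha]
  refine ⟨hJA, hAJ, orth_of_mul J A hJA, ?_⟩
  have hJtA : Jᵀ * A = 0 := by
    have := congrArg Matrix.transpose hAJ
    simpa [Matrix.transpose_mul] using this
  have := orth_of_mul Jᵀ Aᵀ (by simpa using hJtA)
  exact this
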